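/- Let M ∈ ℝ^{n×n} with rank(M) ≤ r. Then there exist B, C ∈ ℝ^{n×r} with B Cᵀ = M and (1/2)(‖B‖_F² + ‖C‖_F²) = Σ_{i=1}^{n} √(μ_i), where μ₁,…,μₙ are the eigenvalues of the real symmetric positive semidefinite matrix Mᵀ M. -/

import Mathlib

open Matrix

private lemma aux_sum_partialInv {α β : Type*} [Fintype α] [Fintype β] [DecidableEq β]
    (f : α → β) (hf : Function.Injective f) (a : α → ℝ) :
    ∑ b : β, (Function.partialInv f b).elim 0 a = ∑ x : α, a x := by
  classical
  have h1 : ∑ x : α, a x = ∑ b ∈ Finset.univ.image f, (Function.partialInv f b).elim 0 a := by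
    rw [Finset.sum_image (fun x _ y _ h => hf h)]
    exact Finset.sum_congr rfl fun x _ => by rw [Function.partialInv_left hf]; rfl
  rw [h1]
  refine (Finset.sum_subset (Finset.subset_univ _) fun b _ hb => ?_).symm
  have hnone : Function.partialInv f b = none := by
    unfold Function.partialInv
    rw [dif_neg]
    rintro ⟨x, rfl⟩
    exact hb (Finset.mem_image_of_mem f (Finset.mem_univ x))
  rw [hnone]
  rfl

/-- Every `M ∈ ℝ^{n×n}` with `rank(M) ≤ r` admits a factorization `M = B Cᵀ` with
`B, C ∈ ℝ^{n×r}` such that `(1/2)(‖B‖_F² + ‖C‖_F²)` equals the nuclear norm of `M`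
(the sum of the square roots of the eigenvalues of `Mᵀ M`). -/
theorem exists_factorization_frobenius_eq_nuclearNorm
    (n r : ℕ) (hn : 0 < n) (hr : 0 < r)
    (M : Matrix (Fin n) (Fin n) ℝ) (hrank : M.rank ≤ r)
    (hH : (Mᵀ * M).IsHermitian) :
    ∃ B C : Matrix (Fin n) (Fin r) ℝ,
      B * Cᵀ = M ∧
      (1 / 2) * ((∑ i : Fin n, ∑ k : Fin r, (B i k) ^ 2) +
                 (∑ i : Fin n, ∑ k : Fin r, (C i k) ^ 2)) =
        ∑ i : Fin n, Real.sqrt (hH.eigenvalues i) := by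
  classical
  set μ : Fin n → ℝ := hH.eigenvalues with hμdef
  set v : Fin n → (Fin n → ℝ) := fun j => ⇑(hH.eigenvectorBasis j) with hvdef
  -- basic facts
  have hPSD : (Mᵀ * M).PosSemidef := by
    have := Matrix.posSemidef_conjTranspose_mul_self M
    simpa using this
  have hμ0 : ∀ j, 0 ≤ μ j := fun j => hPSD.eigenvalues_nonneg j
  have heig : ∀ j, (Mᵀ * M) *ᵥ v j = μ j • v j := fun j => hH.mulVec_eigenvectorBasis j
  have hnorm : ∀ j, ∑ i, v j i * v j i = 1 := by
    intro j
    have h1 : ‖hH.eigenvectorBasis j‖ = 1 := hH.eigenvectorBasis.orthonormal.1 j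
    have h2 : (inner ℝ (hH.eigenvectorBasis j) (hH.eigenvectorBasis j) : ℝ) = 1 := by
      rw [real_inner_self_eq_norm_sq, h1]; norm_num
    rw [PiLp.inner_apply] at h2
    simpa [RCLike.inner_apply, hvdef, pow_two] using h2
  have hMv : ∀ j, ∑ i, ((M *ᵥ v j) i) ^ 2 = μ j := by
    intro j
    have h1 : (M *ᵥ v j) ⬝ᵥ (M *ᵥ v j) = ((Mᵀ * M) *ᵥ v j) ⬝ᵥ v j := by
      rw [dotProduct_mulVec, ← mulVec_transpose, mulVec_mulVec, dotProduct_comm]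
    rw [heig j, smul_dotProduct] at h1
    have h2 : (v j) ⬝ᵥ (v j) = 1 := hnorm j
    simp only [dotProduct] at h1 h2 ⊢
    calc ∑ i, ((M *ᵥ v j) i) ^ 2 = ∑ i, (M *ᵥ v j) i * (M *ᵥ v j) i := by
          exact Finset.sum_congr rfl fun i _ => by rw [pow_two]
      _ = μ j := by rw [h1, h2, smul_eq_mul, mul_one]
  have hker : ∀ j, μ j = 0 → ∀ i, (M *ᵥ v j) i = 0 := by
    intro j hj i
    have h0 : ∑ i, ((M *ᵥ v j) i) ^ 2 = 0 := by rw [hMv j, hj]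
    have := (Finset.sum_eq_zero_iff_of_nonneg
      (fun i _ => sq_nonneg ((M *ᵥ v j) i))).mp h0 i (Finset.mem_univ i)
    exact (pow_eq_zero_iff two_ne_zero).mp this
  -- orthonormality of rows: V * Vᵀ = 1
  have hVVT : ∀ l i, ∑ j, v j l * v j i = if l = i then 1 else 0 := by
    intro l i
    have h1 : (hH.eigenvectorUnitary : Matrix (Fin n) (Fin n) ℝ) *
        star (hH.eigenvectorUnitary : Matrix (Fin n) (Fin n) ℝ) = 1 :=
      (Unitary.mem_iff.mp hH.eigenvectorUnitary.2).2
    have h2 := congrFun (congrFun h1 l) i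
    simp only [mul_apply, star_apply, one_apply, Matrix.IsHermitian.eigenvectorUnitary_apply,
      star_trivial] at h2
    simpa [hvdef] using h2
  -- the embedding
  have hcard : Fintype.card {j : Fin n // μ j ≠ 0} ≤ Fintype.card (Fin r) := by
    rw [Fintype.card_fin, ← hH.rank_eq_card_non_zero_eigs, Matrix.rank_transpose_mul_self]
    exact hrank
  obtain ⟨f⟩ := Function.Embedding.nonempty_of_card_le hcard
  set S := {j : Fin n // μ j ≠ 0}
  set s : Fin n → ℝ := fun j => Real.sqrt (Real.sqrt (μ j)) with hsdef
  have hs_sq : ∀ j, s j ^ 2 = Real.sqrt (μ j) := fun j =>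
    Real.sq_sqrt (Real.sqrt_nonneg _)
  have hs_ne : ∀ j : S, s j.1 ≠ 0 := by
    intro j
    have hpos : 0 < μ j.1 := lt_of_le_of_ne (hμ0 j.1) (Ne.symm j.2)
    exact ne_of_gt (Real.sqrt_pos.mpr (Real.sqrt_pos.mpr hpos))
  set B : Matrix (Fin n) (Fin r) ℝ :=
    fun i k => (Function.partialInv (⇑f) k).elim 0 (fun j => (M *ᵥ v j.1) i / s j.1) with hBdef
  set C : Matrix (Fin n) (Fin r) ℝ :=
    fun i k => (Function.partialInv (⇑f) k).elim 0 (fun j => s j.1 * v j.1 i) with hCdef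
  refine ⟨B, C, ?_, ?_⟩
  · -- B * Cᵀ = M
    ext i i'
    rw [mul_apply]
    have hterm : ∀ k, B i k * Cᵀ k i' =
        (Function.partialInv (⇑f) k).elim 0 (fun j : S => (M *ᵥ v j.1) i * v j.1 i') := by
      intro k
      simp only [transpose_apply]; simp only [hBdef, hCdef]
      rcases Function.partialInv (⇑f) k with _ | j
      · simp
      · simp only [Option.elim]
        rw [div_mul_eq_mul_div, mul_comm (s j.1) (v j.1 i'), ← mul_assoc, mul_div_assoc,
          div_self (hs_ne j), mul_one]
    rw [Finset.sum_congr rfl fun k _ => hterm k,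
      aux_sum_partialInv (⇑f) f.injective]
    -- now ∑ j : S, (M *ᵥ v j) i * v j i' = M i i'
    have hfull : ∑ j : S, (M *ᵥ v j.1) i * v j.1 i'
        = ∑ j : Fin n, (M *ᵥ v j) i * v j i' := by
      rw [← Finset.sum_subtype (Finset.univ.filter (fun j => μ j ≠ 0))
        (fun j => by simp) (fun j => (M *ᵥ v j) i * v j i')]
      rw [Finset.sum_filter]
      refine Finset.sum_congr rfl fun j _ => ?_
      by_cases hj : μ j ≠ 0
      · rw [if_pos hj]
      · rw [if_neg hj, hker j (not_not.mp hj) i, zero_mul]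
    rw [hfull]
    calc ∑ j : Fin n, (M *ᵥ v j) i * v j i'
        = ∑ j : Fin n, ∑ l : Fin n, M i l * v j l * v j i' := by
          refine Finset.sum_congr rfl fun j _ => ?_
          rw [mulVec, dotProduct, Finset.sum_mul]
      _ = ∑ l : Fin n, M i l * ∑ j : Fin n, v j l * v j i' := by
          rw [Finset.sum_comm]
          exact Finset.sum_congr rfl fun l _ => by
            rw [Finset.mul_sum]; exact Finset.sum_congr rfl fun j _ => by ring
      _ = M i i' := by
          simp only [hVVT, mul_ite, mul_one, mul_zero]
          simp
  · -- the norm identity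
    have hBsum : ∑ i : Fin n, ∑ k : Fin r, (B i k) ^ 2 = ∑ j : S, Real.sqrt (μ j.1) := by
      rw [Finset.sum_comm]
      have hcol : ∀ k, ∑ i : Fin n, (B i k) ^ 2 =
          (Function.partialInv (⇑f) k).elim 0 (fun j : S => Real.sqrt (μ j.1)) := by
        intro k
        simp only [hBdef]
        rcases Function.partialInv (⇑f) k with _ | j
        · simp
        · simp only [Option.elim]
          have : ∑ i, ((M *ᵥ v j.1) i / s j.1) ^ 2
              = (∑ i, ((M *ᵥ v j.1) i) ^ 2) / s j.1 ^ 2 := by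
            rw [Finset.sum_div]
            exact Finset.sum_congr rfl fun i _ => by rw [div_pow]
          rw [this, hMv, hs_sq, Real.div_sqrt]
      rw [Finset.sum_congr rfl fun k _ => hcol k]
      exact aux_sum_partialInv (⇑f) f.injective _
    have hCsum : ∑ i : Fin n, ∑ k : Fin r, (C i k) ^ 2 = ∑ j : S, Real.sqrt (μ j.1) := by
      rw [Finset.sum_comm]
      have hcol : ∀ k, ∑ i : Fin n, (C i k) ^ 2 =
          (Function.partialInv (⇑f) k).elim 0 (fun j : S => Real.sqrt (μ j.1)) := by
        intro k
        simp only [hCdef]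
        rcases Function.partialInv (⇑f) k with _ | j
        · simp
        · simp only [Option.elim]
          have : ∑ i, (s j.1 * v j.1 i) ^ 2 = s j.1 ^ 2 * ∑ i, v j.1 i * v j.1 i := by
            rw [Finset.mul_sum]
            exact Finset.sum_congr rfl fun i _ => by ring
          rw [this, hnorm, hs_sq, mul_one]
      rw [Finset.sum_congr rfl fun k _ => hcol k]
      exact aux_sum_partialInv (⇑f) f.injective _
    have hfull : ∑ j : S, Real.sqrt (μ j.1) = ∑ j : Fin n, Real.sqrt (μ j) := by
      rw [← Finset.sum_subtype (Finset.univ.filter (fun j => μ j ≠ 0))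
        (fun j => by simp) (fun j => Real.sqrt (μ j))]
      rw [Finset.sum_filter]
      refine Finset.sum_congr rfl fun j _ => ?_
      by_cases hj : μ j ≠ 0
      · rw [if_pos hj]
      · rw [if_neg hj, not_not.mp hj, Real.sqrt_zero]
    rw [hBsum, hCsum, hfull]
    ring
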